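/- Let f(z) = Σ a_k (z-ζ)^k be a formal power series with center ζ and let p, q ∈ ℕ. If two rational functions A₁/B₁ and A₂/B₂ both satisfy the Padé conditions (deg A_i ≤ p, deg B_i ≤ q, B_i(ζ) = 1, and the Taylor coefficients of A_i/B_i at ζ agree with a_k for all k ≤ p+q), then A₁/B₁ = A₂/B₂ as rational functions, i.e., A₁·B₂ = A₂·B₁. -/

import Mathlib

open Polynomial PowerSeries

/-- `IsPade a ζ p q A B` : the rational function `A/B` satisfies the conditions defining the
`(p,q)`-Padé approximant at center `ζ` of the formal power series `∑ a_k (z - ζ)^k` :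
`deg A ≤ p`, `deg B ≤ q`, `B(ζ) = 1`, and the Taylor coefficients of `A/B` at `ζ`
(i.e. the coefficients of the formal power series `A(ζ+w)·(B(ζ+w))⁻¹` in `w`) agree with
`a_k` for all `k ≤ p + q`. -/
def IsPade (a : ℕ → ℂ) (ζ : ℂ) (p q : ℕ) (A B : Polynomial ℂ) : Prop :=
  A.degree ≤ (p : WithBot ℕ) ∧ B.degree ≤ (q : WithBot ℕ) ∧ B.eval ζ = 1 ∧
    ∀ k ≤ p + q,
      PowerSeries.coeff (R := ℂ) k
        (((Polynomial.taylor ζ A : Polynomial ℂ) : PowerSeries ℂ) *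
          ((Polynomial.taylor ζ B : Polynomial ℂ) : PowerSeries ℂ)⁻¹) = a k

/-- Uniqueness of the Padé approximant as a rational function. -/
theorem pade_unique (a : ℕ → ℂ) (ζ : ℂ) (p q : ℕ) (A₁ B₁ A₂ B₂ : Polynomial ℂ)
    (h₁ : IsPade a ζ p q A₁ B₁) (h₂ : IsPade a ζ p q A₂ B₂) :
    A₁ * B₂ = A₂ * B₁ := by
  obtain ⟨hA₁, hB₁, hBζ₁, hc₁⟩ := h₁
  obtain ⟨hA₂, hB₂, hBζ₂, hc₂⟩ := h₂
  set F₁ : PowerSeries ℂ := ((Polynomial.taylor ζ A₁ : Polynomial ℂ) : PowerSeries ℂ)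
  set F₂ : PowerSeries ℂ := ((Polynomial.taylor ζ A₂ : Polynomial ℂ) : PowerSeries ℂ)
  set G₁ : PowerSeries ℂ := ((Polynomial.taylor ζ B₁ : Polynomial ℂ) : PowerSeries ℂ)
  set G₂ : PowerSeries ℂ := ((Polynomial.taylor ζ B₂ : Polynomial ℂ) : PowerSeries ℂ)
  have hG₁ : PowerSeries.constantCoeff G₁ ≠ 0 := by
    rw [Polynomial.constantCoeff_coe, Polynomial.taylor_coeff_zero, hBζ₁]
    exact one_ne_zero
  have hG₂ : PowerSeries.constantCoeff G₂ ≠ 0 := by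
    rw [Polynomial.constantCoeff_coe, Polynomial.taylor_coeff_zero, hBζ₂]
    exact one_ne_zero
  have hinv₁ : G₁⁻¹ * G₁ = 1 := PowerSeries.inv_mul_cancel _ hG₁
  have hinv₂ : G₂⁻¹ * G₂ = 1 := PowerSeries.inv_mul_cancel _ hG₂
  have key : F₁ * G₂ - F₂ * G₁ = (F₁ * G₁⁻¹ - F₂ * G₂⁻¹) * (G₁ * G₂) := by
    linear_combination (-(F₁ * G₂)) * hinv₁ + (F₂ * G₁) * hinv₂
  -- the polynomial difference
  set g : Polynomial ℂ :=
    (Polynomial.taylor ζ A₁ : Polynomial ℂ) * (Polynomial.taylor ζ B₂ : Polynomial ℂ) -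
      (Polynomial.taylor ζ A₂ : Polynomial ℂ) * (Polynomial.taylor ζ B₁ : Polynomial ℂ) with hg
  have hgcoe : (g : PowerSeries ℂ) = F₁ * G₂ - F₂ * G₁ := by
    rw [hg, Polynomial.coe_sub, Polynomial.coe_mul, Polynomial.coe_mul]
  have hnA₁ : A₁.natDegree ≤ p := Polynomial.natDegree_le_iff_degree_le.2 hA₁
  have hnA₂ : A₂.natDegree ≤ p := Polynomial.natDegree_le_iff_degree_le.2 hA₂
  have hnB₁ : B₁.natDegree ≤ q := Polynomial.natDegree_le_iff_degree_le.2 hB₁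
  have hnB₂ : B₂.natDegree ≤ q := Polynomial.natDegree_le_iff_degree_le.2 hB₂
  have hg0 : g = 0 := by
    ext n
    rw [Polynomial.coeff_zero]
    by_cases hn : n ≤ p + q
    · have : g.coeff n = PowerSeries.coeff (R := ℂ) n ((F₁ * G₁⁻¹ - F₂ * G₂⁻¹) * (G₁ * G₂)) := by
        rw [← key, ← hgcoe, Polynomial.coeff_coe]
      rw [this, PowerSeries.coeff_mul]
      refine Finset.sum_eq_zero fun x hx => ?_
      have hx1 : x.1 ≤ p + q := by
        have := Finset.HasAntidiagonal.mem_antidiagonal.1 hx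
        omega
      have : PowerSeries.coeff (R := ℂ) x.1 (F₁ * G₁⁻¹ - F₂ * G₂⁻¹) = 0 := by
        rw [map_sub, hc₁ x.1 hx1, hc₂ x.1 hx1, sub_self]
      rw [this, zero_mul]
    · apply Polynomial.coeff_eq_zero_of_natDegree_lt
      apply lt_of_le_of_lt _ (by omega : p + q < n)
      refine le_trans (Polynomial.natDegree_sub_le _ _) (max_le ?_ ?_) <;>
        refine le_trans Polynomial.natDegree_mul_le ?_ <;>
          rw [Polynomial.natDegree_taylor, Polynomial.natDegree_taylor] <;> omega
  rw [hg] at hg0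
  have h' := sub_eq_zero.mp hg0
  apply Polynomial.taylor_injective ζ
  rw [Polynomial.taylor_mul, Polynomial.taylor_mul]
  exact h'
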